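/- Consider a two-player stochastic game and fix player i with stage payoff r = rⁱ, and let Q_* be the unique fixed point of the Shapley operator 𝓕ⁱ. Let (Q̂_k)_{k≥0} with Q̂_k : S × A → ℝ be a uniformly bounded sequence satisfying Q̂_{k+1}(s,a) = Q̂_k(s,a) + β̄_k(s) (r(s,a) + γ Σ_{s'} p(s'|s,a) v̂_k(s') − Q̂_k(s,a)) for all (s,a), where the value estimates v̂_k : S → ℝ satisfy v̂_k(s') ≥ valⁱ(Q̂_k(s',·)) for all k and s', and the step sizes satisfy β̄_k(s) ∈ [0,1], β̄_k(s) → 0, and Σ_{k=0}^∞ β̄_k(s) = ∞ for each s ∈ S. If γ ∈ (0,1), then liminf_{k→∞} (Q̂_k(s,a) − Q_*(s,a)) ≥ 0 for every (s,a) ∈ S × A. -/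

import Mathlib

open Filter Topology Finset

noncomputable section

def simplex (A : Type) [Fintype A] : Set (A → ℝ) :=
  {μ | (∀ a, 0 ≤ μ a) ∧ ∑ a, μ a = 1}

def expPay {A B : Type} [Fintype A] [Fintype B]
    (μ : A → ℝ) (ν : B → ℝ) (Q : A → B → ℝ) : ℝ :=
  ∑ a, ∑ b, μ a * ν b * Q a b

def val1 {A B : Type} [Fintype A] [Fintype B] (Q : A → B → ℝ) : ℝ :=
  ⨆ μ : simplex A, ⨅ ν : simplex B, expPay (μ : A → ℝ) (ν : B → ℝ) Q

def val2 {A B : Type} [Fintype A] [Fintype B] (Q : A → B → ℝ) : ℝ :=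
  ⨆ ν : simplex B, ⨅ μ : simplex A, expPay (μ : A → ℝ) (ν : B → ℝ) Q

def vhat1 {A B : Type} [Fintype A] [Fintype B] [Nonempty A]
    (Q : A → B → ℝ) (ν : B → ℝ) : ℝ :=
  Finset.univ.sup' Finset.univ_nonempty (fun a => ∑ b, ν b * Q a b)

def vhat2 {A B : Type} [Fintype A] [Fintype B] [Nonempty B]
    (Q : A → B → ℝ) (μ : A → ℝ) : ℝ :=
  Finset.univ.sup' Finset.univ_nonempty (fun b => ∑ a, μ a * Q a b)

def visits {S : Type} [DecidableEq S] (st : ℕ → S) (k : ℕ) (s : S) : ℕ :=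
  ((Finset.range k).filter (fun j => st j = s)).card

def shapley1 {S A B : Type} [Fintype S] [Fintype A] [Fintype B]
    (r : S → A → B → ℝ) (p : S → A → B → S → ℝ) (γ : ℝ)
    (Q : S → A → B → ℝ) : S → A → B → ℝ :=
  fun s a b => r s a b + γ * ∑ s', p s a b s' * val1 (Q s')

def shapley2 {S A B : Type} [Fintype S] [Fintype A] [Fintype B]
    (r : S → A → B → ℝ) (p : S → A → B → S → ℝ) (γ : ℝ)
    (Q : S → A → B → ℝ) : S → A → B → ℝ :=
  fun s a b => r s a b + γ * ∑ s', p s a b s' * val2 (Q s')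

section Aux

variable {A B : Type} [Fintype A] [Fintype B]

lemma simplex_le_one {μ : A → ℝ} (h : μ ∈ simplex A) (a : A) : μ a ≤ 1 := by
  have h1 := Finset.single_le_sum (f := μ) (fun b _ => h.1 b) (Finset.mem_univ a)
  rw [h.2] at h1; exact h1

instance simplex_nonempty [Nonempty A] : Nonempty (simplex A) := by
  refine ⟨⟨fun _ => (Fintype.card A : ℝ)⁻¹, fun a => by positivity, ?_⟩⟩
  have hc : (0:ℝ) < Fintype.card A := by exact_mod_cast Fintype.card_pos
  rw [Finset.sum_const, Finset.card_univ, nsmul_eq_mul]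
  exact mul_inv_cancel₀ (ne_of_gt hc)

lemma abs_expPay_le {μ : A → ℝ} {ν : B → ℝ}
    (hμ : μ ∈ simplex A) (hν : ν ∈ simplex B) (Q : A → B → ℝ) :
    |expPay μ ν Q| ≤ ∑ a, ∑ b, |Q a b| := by
  unfold expPay
  calc |∑ a, ∑ b, μ a * ν b * Q a b| ≤ ∑ a, |∑ b, μ a * ν b * Q a b| :=
        Finset.abs_sum_le_sum_abs _ _
    _ ≤ ∑ a, ∑ b, |μ a * ν b * Q a b| :=
        Finset.sum_le_sum fun a _ => Finset.abs_sum_le_sum_abs _ _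
    _ ≤ ∑ a, ∑ b, |Q a b| := by
        refine Finset.sum_le_sum fun a _ => Finset.sum_le_sum fun b _ => ?_
        rw [abs_mul, abs_mul, abs_of_nonneg (hμ.1 a), abs_of_nonneg (hν.1 b)]
        have h1 : μ a * ν b ≤ 1 :=
          mul_le_one₀ (simplex_le_one hμ a) (hν.1 b) (simplex_le_one hν b)
        nlinarith [mul_le_mul_of_nonneg_right h1 (abs_nonneg (Q a b))]

lemma expPay_shift {μ : A → ℝ} {ν : B → ℝ}
    (hμ : μ ∈ simplex A) (hν : ν ∈ simplex B) {X Y : A → B → ℝ} {c : ℝ}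
    (h : ∀ a b, Y a b + c ≤ X a b) :
    expPay μ ν Y + c ≤ expPay μ ν X := by
  have hc : ∑ a, ∑ b, μ a * ν b * c = c := by
    have h1 : ∀ a ∈ Finset.univ, ∑ b, μ a * ν b * c = μ a * c := fun a _ => by
      rw [← Finset.sum_mul, ← Finset.mul_sum, hν.2, mul_one]
    rw [Finset.sum_congr rfl h1, ← Finset.sum_mul, hμ.2, one_mul]
  have hterm : ∀ a b, μ a * ν b * Y a b + μ a * ν b * c ≤ μ a * ν b * X a b := fun a b => by
    have := mul_le_mul_of_nonneg_left (h a b) (mul_nonneg (hμ.1 a) (hν.1 b))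
    nlinarith [this]
  have heq : ∑ a, ∑ b, (μ a * ν b * Y a b + μ a * ν b * c) = expPay μ ν Y + c := by
    calc ∑ a, ∑ b, (μ a * ν b * Y a b + μ a * ν b * c)
        = (∑ a, ∑ b, μ a * ν b * Y a b) + ∑ a, ∑ b, μ a * ν b * c := by
          rw [← Finset.sum_add_distrib]
          exact Finset.sum_congr rfl fun a _ => Finset.sum_add_distrib
      _ = expPay μ ν Y + c := by rw [hc]; rfl
  rw [← heq]
  exact Finset.sum_le_sum fun a _ => Finset.sum_le_sum fun b _ => hterm a b

lemma val1_shift [Nonempty A] [Nonempty B]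
    (X Y : A → B → ℝ) (c : ℝ) (h : ∀ a b, Y a b + c ≤ X a b) :
    val1 Y + c ≤ val1 X := by
  have hbb : ∀ (Q : A → B → ℝ) (μ : simplex A),
      BddBelow (Set.range fun ν : simplex B => expPay (μ : A → ℝ) (ν : B → ℝ) Q) := by
    intro Q μ
    refine ⟨-(∑ a, ∑ b, |Q a b|), ?_⟩
    rintro x ⟨ν, rfl⟩
    have := abs_expPay_le μ.2 ν.2 Q
    linarith [(abs_le.mp this).1]
  have hFub : ∀ (Q : A → B → ℝ) (μ : simplex A),
      (⨅ ν : simplex B, expPay (μ : A → ℝ) (ν : B → ℝ) Q) ≤ ∑ a, ∑ b, |Q a b| := by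
    intro Q μ
    have ν0 : simplex B := Classical.arbitrary _
    exact le_trans (ciInf_le (hbb Q μ) ν0)
      (le_trans (le_abs_self _) (abs_expPay_le μ.2 ν0.2 Q))
  have hbA : BddAbove (Set.range fun μ : simplex A =>
      ⨅ ν : simplex B, expPay (μ : A → ℝ) (ν : B → ℝ) X) := by
    refine ⟨∑ a, ∑ b, |X a b|, ?_⟩
    rintro x ⟨μ, rfl⟩
    exact hFub X μ
  have key : ∀ μ : simplex A,
      (⨅ ν : simplex B, expPay (μ : A → ℝ) (ν : B → ℝ) Y) + c
        ≤ ⨅ ν : simplex B, expPay (μ : A → ℝ) (ν : B → ℝ) X := by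
    intro μ
    refine le_ciInf fun ν => ?_
    have h1 := ciInf_le (hbb Y μ) ν
    have h2 := expPay_shift μ.2 ν.2 h
    linarith
  have h2 : ∀ μ : simplex A,
      (⨅ ν : simplex B, expPay (μ : A → ℝ) (ν : B → ℝ) Y) ≤ val1 X - c := fun μ => by
    have h3 := le_ciSup hbA μ
    have h4 := key μ
    unfold val1
    linarith
  have h5 := ciSup_le h2
  unfold val1 at h5 ⊢
  linarith

lemma expPay_swap (μ : A → ℝ) (ν : B → ℝ) (Q : A → B → ℝ) :
    expPay μ ν Q = expPay ν μ (fun b a => Q a b) := by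
  unfold expPay
  rw [Finset.sum_comm]
  exact Finset.sum_congr rfl fun b _ => Finset.sum_congr rfl fun a _ => by ring

lemma val2_eq_val1_swap (Q : A → B → ℝ) : val2 Q = val1 (fun b a => Q a b) := by
  unfold val1 val2
  exact iSup_congr fun ν => iInf_congr fun μ => expPay_swap (μ : A → ℝ) (ν : B → ℝ) Q

lemma val2_shift [Nonempty A] [Nonempty B]
    (X Y : A → B → ℝ) (c : ℝ) (h : ∀ a b, Y a b + c ≤ X a b) :
    val2 Y + c ≤ val2 X := by
  rw [val2_eq_val1_swap, val2_eq_val1_swap]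
  exact val1_shift _ _ c (fun b a => h a b)

end Aux

/-- if the value estimates dominate the minimax values of the current
Q-estimates, then the Q-estimates are asymptotically bounded from below by the
fixed point of the player's Shapley operator. Here `valf` is the minimax value of
the fixed player i (either val¹ or val²). -/
theorem liminf_Q_above_fixed_point
    {S A1 A2 : Type} [Fintype S] [Fintype A1] [Fintype A2]
    [Nonempty S] [Nonempty A1] [Nonempty A2]
    (valf : (A1 → A2 → ℝ) → ℝ) (hvalf : valf = val1 ∨ valf = val2)
    (r : S → A1 → A2 → ℝ)
    (p : S → A1 → A2 → S → ℝ) (hp : ∀ s a1 a2, p s a1 a2 ∈ simplex S)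
    (γ : ℝ) (hγ : γ ∈ Set.Ioo (0:ℝ) 1)
    (Qs : S → A1 → A2 → ℝ)
    (hfix : ∀ s a1 a2, Qs s a1 a2 = r s a1 a2 + γ * ∑ s', p s a1 a2 s' * valf (Qs s'))
    (Q : ℕ → S → A1 → A2 → ℝ)
    (hbdd : ∃ B : ℝ, ∀ k s a1 a2, |Q k s a1 a2| ≤ B)
    (v : ℕ → S → ℝ) (hv : ∀ k s, valf (Q k s) ≤ v k s)
    (β : ℕ → S → ℝ) (hβmem : ∀ k s, β k s ∈ Set.Icc (0:ℝ) 1)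
    (hβlim : ∀ s, Tendsto (fun k => β k s) atTop (𝓝 0))
    (hβsum : ∀ s, Tendsto (fun K => ∑ k ∈ Finset.range K, β k s) atTop atTop)
    (hup : ∀ k s a1 a2, Q (k+1) s a1 a2 = Q k s a1 a2
        + β k s * (r s a1 a2 + γ * (∑ s', p s a1 a2 s' * v k s') - Q k s a1 a2)) :
    ∀ s a1 a2, 0 ≤ atTop.liminf (fun k => Q k s a1 a2 - Qs s a1 a2) := by
  obtain ⟨hγ0, hγ1⟩ := hγ
  obtain ⟨B, hB⟩ := hbdd
  have hshift : ∀ (X Y : A1 → A2 → ℝ) (c : ℝ), (∀ a b, Y a b + c ≤ X a b) →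
      valf Y + c ≤ valf X := by
    rcases hvalf with h | h <;> subst h
    · exact fun X Y c hc => val1_shift X Y c hc
    · exact fun X Y c hc => val2_shift X Y c hc
  set D : ℕ → S × A1 × A2 → ℝ :=
    fun k q => Q k q.1 q.2.1 q.2.2 - Qs q.1 q.2.1 q.2.2 with hD
  have hne : (Finset.univ : Finset (S × A1 × A2)).Nonempty := Finset.univ_nonempty
  set m : ℕ → ℝ := fun k => Finset.univ.inf' hne (D k) with hm
  -- a uniform bound on D
  set MQ : ℝ := Finset.univ.sup' hne (fun q : S × A1 × A2 => |Qs q.1 q.2.1 q.2.2|) with hMQ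
  set C : ℝ := B + MQ with hC'
  have hC : ∀ k q, |D k q| ≤ C := by
    intro k q
    have h1 : |Qs q.1 q.2.1 q.2.2| ≤ MQ :=
      Finset.le_sup' (fun q : S × A1 × A2 => |Qs q.1 q.2.1 q.2.2|) (Finset.mem_univ q)
    have h2 := hB k q.1 q.2.1 q.2.2
    calc |D k q| ≤ |Q k q.1 q.2.1 q.2.2| + |Qs q.1 q.2.1 q.2.2| := abs_sub _ _
      _ ≤ C := by rw [hC']; linarith
  have hmle : ∀ k q, m k ≤ D k q := fun k q => Finset.inf'_le (D k) (Finset.mem_univ q)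
  have hmub : ∀ k, m k ≤ C := fun k => by
    obtain ⟨q, _⟩ := hne
    exact le_trans (hmle k q) (le_trans (le_abs_self _) (hC k q))
  have hmlb : ∀ k, -C ≤ m k := fun k =>
    Finset.le_inf' hne _ fun q _ => (abs_le.mp (hC k q)).1
  have hbddm_above : atTop.IsBoundedUnder (· ≤ ·) m := isBoundedUnder_of ⟨C, hmub⟩
  have hbddm_below : atTop.IsBoundedUnder (· ≥ ·) m := isBoundedUnder_of ⟨-C, hmlb⟩
  set lam : ℝ := atTop.liminf m with hlam
  -- key one-step recursion inequality
  have hrec : ∀ k (q : S × A1 × A2),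
      (1 - β k q.1) * D k q + β k q.1 * γ * m k ≤ D (k+1) q := by
    rintro k ⟨s, a1, a2⟩
    have hβ := hβmem k s
    have hv' : ∀ s', valf (Qs s') + m k ≤ v k s' := by
      intro s'
      refine le_trans ?_ (hv k s')
      refine hshift (Q k s') (Qs s') (m k) (fun a b => ?_)
      have := hmle k (s', a, b)
      simp only [hD] at this
      linarith
    have hQu := hup k s a1 a2
    have hQs := hfix s a1 a2
    set σv : ℝ := ∑ s', p s a1 a2 s' * v k s' with hσv
    set σw : ℝ := ∑ s', p s a1 a2 s' * valf (Qs s') with hσw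
    have hsum : m k ≤ σv - σw := by
      have hsplit : σv - σw = ∑ s', p s a1 a2 s' * (v k s' - valf (Qs s')) := by
        rw [hσv, hσw, ← Finset.sum_sub_distrib]
        exact Finset.sum_congr rfl fun s' _ => by ring
      rw [hsplit]
      calc m k = ∑ s', p s a1 a2 s' * m k := by
            rw [← Finset.sum_mul, (hp s a1 a2).2, one_mul]
        _ ≤ _ := Finset.sum_le_sum fun s' _ =>
            mul_le_mul_of_nonneg_left (by linarith [hv' s']) ((hp s a1 a2).1 s')
    have hmain : β k s * γ * m k ≤ β k s * γ * (σv - σw) :=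
      mul_le_mul_of_nonneg_left hsum (mul_nonneg hβ.1 hγ0.le)
    simp only [hD]
    calc (1 - β k s) * (Q k s a1 a2 - Qs s a1 a2) + β k s * γ * m k
        ≤ (1 - β k s) * (Q k s a1 a2 - Qs s a1 a2) + β k s * γ * (σv - σw) := by
          linarith
      _ = Q (k+1) s a1 a2 - Qs s a1 a2 := by rw [hQu, hQs]; ring
  -- core estimate : lam is almost above γ * lam
  have hcore : ∀ ε > (0:ℝ), ∀ δ > (0:ℝ), γ * (lam - ε) - δ ≤ lam := by
    intro ε hε δ hδ
    have hev : ∀ᶠ k in atTop, lam - ε < m k :=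
      eventually_lt_of_lt_liminf (by linarith) hbddm_below
    obtain ⟨K, hK⟩ := eventually_atTop.mp hev
    have hcoord : ∀ q : S × A1 × A2, ∀ᶠ k in atTop, γ * (lam - ε) - δ ≤ D k q := by
      intro q
      set c : ℝ := γ * (lam - ε) with hc
      have hstep : ∀ k, K ≤ k → (1 - β k q.1) * (D k q - c) ≤ D (k+1) q - c := by
        intro k hk
        have h1 := hrec k q
        have h2 := hK k hk
        have hβ := hβmem k q.1
        have h3 : β k q.1 * c ≤ β k q.1 * (γ * m k) :=
          mul_le_mul_of_nonneg_left
            (mul_le_mul_of_nonneg_left h2.le hγ0.le) hβ.1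
        nlinarith [h1, h3]
      have hind : ∀ n : ℕ,
          (∏ j ∈ Finset.range n, (1 - β (K + j) q.1)) * min (D K q - c) 0
            ≤ D (K + n) q - c := by
        intro n
        induction n with
        | zero => simpa using min_le_left (D K q - c) 0
        | succ n ih =>
          have h1 := hstep (K + n) (Nat.le_add_right K n)
          have hβ := hβmem (K + n) q.1
          have hfac : 0 ≤ 1 - β (K + n) q.1 := by linarith [hβ.2]
          calc (∏ j ∈ Finset.range (n+1), (1 - β (K + j) q.1)) * min (D K q - c) 0
              = (1 - β (K + n) q.1) *
                ((∏ j ∈ Finset.range n, (1 - β (K + j) q.1)) * min (D K q - c) 0) := by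
                rw [Finset.prod_range_succ]; ring
            _ ≤ (1 - β (K + n) q.1) * (D (K + n) q - c) :=
                mul_le_mul_of_nonneg_left ih hfac
            _ ≤ D (K + n + 1) q - c := h1
      -- the product tends to zero
      have hP0 : ∀ n, 0 ≤ ∏ j ∈ Finset.range n, (1 - β (K + j) q.1) := fun n =>
        Finset.prod_nonneg fun j _ => by linarith [(hβmem (K + j) q.1).2]
      have hPle : ∀ n, (∏ j ∈ Finset.range n, (1 - β (K + j) q.1))
          ≤ Real.exp (-(∑ j ∈ Finset.range n, β (K + j) q.1)) := by
        intro n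
        rw [← Finset.sum_neg_distrib, Real.exp_sum]
        refine Finset.prod_le_prod (fun j _ => by linarith [(hβmem (K + j) q.1).2])
          (fun j _ => ?_)
        have := Real.add_one_le_exp (-(β (K + j) q.1))
        linarith
      have hsum2 : Tendsto (fun n => ∑ j ∈ Finset.range n, β (K + j) q.1) atTop atTop := by
        have h1 : ∀ n, ∑ j ∈ Finset.range n, β (K + j) q.1
            = (∑ j ∈ Finset.range (K + n), β j q.1) - ∑ j ∈ Finset.range K, β j q.1 := by
          intro n; rw [Finset.sum_range_add]; ring
        simp only [h1]
        have h2 : Tendsto (fun n => ∑ j ∈ Finset.range (K + n), β j q.1) atTop atTop := by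
          refine (hβsum q.1).comp ?_
          exact tendsto_atTop_atTop_of_monotone (fun a b hab => by omega)
            (fun b => ⟨b, Nat.le_add_left b K⟩)
        simpa [sub_eq_add_neg] using
          tendsto_atTop_add_const_right atTop (-(∑ j ∈ Finset.range K, β j q.1)) h2
      have hPlim : Tendsto (fun n => ∏ j ∈ Finset.range n, (1 - β (K + j) q.1))
          atTop (𝓝 0) := by
        refine squeeze_zero hP0 hPle ?_
        exact Real.tendsto_exp_atBot.comp (tendsto_neg_atTop_atBot.comp hsum2)
      have hPmul : Tendsto (fun n => (∏ j ∈ Finset.range n, (1 - β (K + j) q.1))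
          * min (D K q - c) 0) atTop (𝓝 0) := by
        simpa using hPlim.mul_const (min (D K q - c) 0)
      have hevn : ∀ᶠ n in atTop, -δ < (∏ j ∈ Finset.range n, (1 - β (K + j) q.1))
          * min (D K q - c) 0 :=
        hPmul.eventually (eventually_gt_nhds (by linarith : -δ < (0:ℝ)))
      obtain ⟨N, hN⟩ := eventually_atTop.mp hevn
      rw [eventually_atTop]
      refine ⟨K + N, fun k hk => ?_⟩
      have hKk : K ≤ k := le_trans (Nat.le_add_right K N) hk
      have hkeq : k = K + (k - K) := by omega
      have hNk : N ≤ k - K := by omega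
      have h4 := hind (k - K)
      have h5 := hN (k - K) hNk
      rw [← hkeq] at h4
      rw [hc] at h4 ⊢
      linarith
    have hall : ∀ᶠ k in atTop, ∀ q : S × A1 × A2, γ * (lam - ε) - δ ≤ D k q :=
      eventually_all.mpr hcoord
    have hmev : ∀ᶠ k in atTop, γ * (lam - ε) - δ ≤ m k :=
      hall.mono fun k hk => Finset.le_inf' hne _ fun q _ => hk q
    exact le_liminf_of_le hbddm_above.isCoboundedUnder_ge hmev
  have hgl : γ * lam ≤ lam := by
    by_contra hcon
    push_neg at hcon
    set t : ℝ := (γ * lam - lam) / (2 * (γ + 1)) with ht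
    have ht0 : 0 < t := by
      rw [ht]
      exact div_pos (by linarith) (by positivity)
    have h5 := hcore t ht0 t ht0
    have heq : γ * t + t = (γ * lam - lam) / 2 := by
      rw [ht]
      field_simp
    linarith
  have hlam0 : 0 ≤ lam := by
    by_contra h
    push_neg at h
    nlinarith [mul_pos (sub_pos.mpr hγ1) (neg_pos.mpr h)]
  intro s a1 a2
  have hmono : lam ≤ atTop.liminf (fun k => Q k s a1 a2 - Qs s a1 a2) := by
    refine liminf_le_liminf ?_ hbddm_below ?_
    · exact Eventually.of_forall fun k => hmle k (s, a1, a2)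
    · refine IsBoundedUnder.isCoboundedUnder_ge (isBoundedUnder_of ⟨C, fun k => ?_⟩)
      exact le_trans (le_abs_self _) (hC k (s, a1, a2))
  linarith
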